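/- For all nonnegative integers k and j, the Legendre-Stirling numbers with even first index satisfy {2k brace j}_1 = Σ_{μ=0}^{k} C(2k, 2μ) {k+μ brace j}_{1/2}. -/

import Mathlib

noncomputable def LS : ℕ → ℕ → ℝ
  | 0, 0 => 1
  | 0, _ + 1 => 0
  | _ + 1, 0 => 0
  | n + 1, j + 1 => LS n j + ((j:ℝ) + 1) * ((j:ℝ) + 2) * LS n (j + 1)

noncomputable def CS : ℕ → ℕ → ℝ
  | 0, 0 => 1
  | 0, _ + 1 => 0
  | _ + 1, 0 => 0
  | n + 1, j + 1 => CS n j + ((j:ℝ) + 1) ^ 2 * CS n (j + 1)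

lemma LS_zero (n : ℕ) : LS (n + 1) 0 = 0 := rfl

lemma CS_zero (n : ℕ) : CS (n + 1) 0 = 0 := rfl

lemma LS_rec (n j : ℕ) :
    LS (n + 1) (j + 1) = LS n j + ((j:ℝ) + 1) * ((j:ℝ) + 2) * LS n (j + 1) := rfl

lemma CS_rec (n j : ℕ) :
    CS (n + 1) (j + 1) = CS n j + ((j:ℝ) + 1) ^ 2 * CS n (j + 1) := rfl

/-- Pascal split for odd lower index. -/
lemma helper1 (n K : ℕ) (x : ℕ → ℝ) :
    ∑ μ ∈ Finset.range K, ((n + 1).choose (2 * μ + 1) : ℝ) * x μ =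
      ∑ μ ∈ Finset.range K, ((n).choose (2 * μ) : ℝ) * x μ +
      ∑ μ ∈ Finset.range K, ((n).choose (2 * μ + 1) : ℝ) * x μ := by
  rw [← Finset.sum_add_distrib]
  refine Finset.sum_congr rfl fun μ _ => ?_
  rw [Nat.choose_succ_succ]
  push_cast
  ring

/-- Pascal split for even lower index (peeling off the constant term μ = 0). -/
lemma helper2 (n K : ℕ) (x : ℕ → ℝ) :
    ∑ μ ∈ Finset.range (K + 1), ((n + 1).choose (2 * μ) : ℝ) * x μ =
      ∑ μ ∈ Finset.range (K + 1), ((n).choose (2 * μ) : ℝ) * x μ +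
      ∑ μ ∈ Finset.range K, ((n).choose (2 * μ + 1) : ℝ) * x (μ + 1) := by
  rw [Finset.sum_range_succ' (fun μ => ((n + 1).choose (2 * μ) : ℝ) * x μ),
    Finset.sum_range_succ' (fun μ => ((n).choose (2 * μ) : ℝ) * x μ)]
  simp only [Nat.mul_zero, Nat.choose_zero_right]
  rw [add_right_comm]
  congr 1
  rw [← Finset.sum_add_distrib]
  refine Finset.sum_congr rfl fun μ _ => ?_
  have h : 2 * (μ + 1) = (2 * μ + 1) + 1 := by ring
  rw [h, Nat.choose_succ_succ]
  push_cast
  ring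

/-- CS recurrence distributed over a sum. -/
lemma helper3 (K m : ℕ) (c : ℕ → ℝ) (f : ℕ → ℕ) :
    ∑ μ ∈ Finset.range K, c μ * CS (f μ + 1) (m + 1) =
      ∑ μ ∈ Finset.range K, c μ * CS (f μ) m +
      ((m:ℝ) + 1) ^ 2 * ∑ μ ∈ Finset.range K, c μ * CS (f μ) (m + 1) := by
  rw [Finset.mul_sum, ← Finset.sum_add_distrib]
  refine Finset.sum_congr rfl fun μ _ => ?_
  rw [CS_rec]
  ring

/-- Drop a vanishing last term. -/
lemma helperz (K : ℕ) (g : ℕ → ℝ) (h : g K = 0) :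
    ∑ μ ∈ Finset.range (K + 1), g μ = ∑ μ ∈ Finset.range K, g μ := by
  rw [Finset.sum_range_succ, h, add_zero]

def Ek (k : ℕ) : Prop :=
  ∀ j, LS (2 * k) j =
    ∑ μ ∈ Finset.range (k + 1), ((2 * k).choose (2 * μ) : ℝ) * CS (k + μ) j

def Ok (k : ℕ) : Prop :=
  ∀ j, LS (2 * k + 1) j =
    ∑ μ ∈ Finset.range (k + 1), ((2 * k + 1).choose (2 * μ + 1) : ℝ) * CS (k + μ + 1) j

def UEk (k : ℕ) : Prop :=
  ∀ j, ∑ μ ∈ Finset.range (k + 1), ((2 * k).choose (2 * μ + 1) : ℝ) * CS (k + μ + 1) j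
    = (j : ℝ) * LS (2 * k) j

def UOk (k : ℕ) : Prop :=
  ∀ j, ∑ μ ∈ Finset.range (k + 1), ((2 * k + 1).choose (2 * μ) : ℝ) * CS (k + μ + 1) j
    = (j : ℝ) * LS (2 * k + 1) j

lemma Ek_zero : Ek 0 := by
  intro j
  cases j <;> simp [LS, CS]

lemma UEk_zero : UEk 0 := by
  intro j
  cases j <;> simp [LS, CS]

lemma L1 (k : ℕ) (hE : Ek k) (hUE : UEk k) : Ok k := by
  intro j
  cases j with
  | zero =>
      rw [LS_zero (2 * k)]
      symm
      refine Finset.sum_eq_zero fun μ _ => ?_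
      rw [CS_zero (k + μ), mul_zero]
  | succ m =>
      rw [LS_rec (2 * k) m,
        helper1 (2 * k) (k + 1) (fun μ => CS (k + μ + 1) (m + 1)),
        helper3 (k + 1) m (fun μ => ((2 * k).choose (2 * μ) : ℝ)) (fun μ => k + μ),
        hUE (m + 1), ← hE m, ← hE (m + 1)]
      push_cast
      ring

lemma L4 (k : ℕ) (hE : Ek k) (hUE : UEk k) : UOk k := by
  intro j
  cases j with
  | zero =>
      rw [Nat.cast_zero, zero_mul]
      refine Finset.sum_eq_zero fun μ _ => ?_
      rw [CS_zero (k + μ), mul_zero]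
  | succ m =>
      rw [helper2 (2 * k) k (fun μ => CS (k + μ + 1) (m + 1)),
        helper3 (k + 1) m (fun μ => ((2 * k).choose (2 * μ) : ℝ)) (fun μ => k + μ)]
      have h2 : ∑ μ ∈ Finset.range k,
          ((2 * k).choose (2 * μ + 1) : ℝ) * CS (k + (μ + 1) + 1) (m + 1) =
          ∑ μ ∈ Finset.range (k + 1),
          ((2 * k).choose (2 * μ + 1) : ℝ) * CS ((k + μ + 1) + 1) (m + 1) := by
        rw [helperz k (fun μ => ((2 * k).choose (2 * μ + 1) : ℝ) * CS ((k + μ + 1) + 1) (m + 1))]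
        · exact Finset.sum_congr rfl fun μ _ => rfl
        · rw [Nat.choose_eq_zero_of_lt (by omega), Nat.cast_zero, zero_mul]
      rw [h2,
        helper3 (k + 1) m (fun μ => ((2 * k).choose (2 * μ + 1) : ℝ)) (fun μ => k + μ + 1),
        hUE m, hUE (m + 1), ← hE m, ← hE (m + 1), LS_rec (2 * k) m]
      push_cast
      ring

lemma L2 (k : ℕ) (hO : Ok k) (hUO : UOk k) : Ek (k + 1) := by
  intro j
  have h2k : 2 * (k + 1) = (2 * k + 1) + 1 := by ring
  cases j with
  | zero =>
      rw [h2k, LS_zero (2 * k + 1)]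
      symm
      refine Finset.sum_eq_zero fun μ _ => ?_
      rw [show k + 1 + μ = (k + μ) + 1 by omega, CS_zero (k + μ), mul_zero]
  | succ m =>
      rw [h2k, LS_rec (2 * k + 1) m,
        helper2 (2 * k + 1) (k + 1) (fun μ => CS (k + 1 + μ) (m + 1))]
      have h1 : ∑ μ ∈ Finset.range (k + 1 + 1),
          ((2 * k + 1).choose (2 * μ) : ℝ) * CS (k + 1 + μ) (m + 1) =
          ∑ μ ∈ Finset.range (k + 1),
          ((2 * k + 1).choose (2 * μ) : ℝ) * CS (k + μ + 1) (m + 1) := by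
        rw [helperz (k + 1) (fun μ => ((2 * k + 1).choose (2 * μ) : ℝ) * CS (k + 1 + μ) (m + 1))]
        · refine Finset.sum_congr rfl fun μ _ => ?_
          congr 2
          omega
        · rw [Nat.choose_eq_zero_of_lt (by omega), Nat.cast_zero, zero_mul]
      have h2 : ∑ μ ∈ Finset.range (k + 1),
          ((2 * k + 1).choose (2 * μ + 1) : ℝ) * CS (k + 1 + (μ + 1)) (m + 1) =
          ∑ μ ∈ Finset.range (k + 1),
          ((2 * k + 1).choose (2 * μ + 1) : ℝ) * CS ((k + μ + 1) + 1) (m + 1) := by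
        refine Finset.sum_congr rfl fun μ _ => ?_
        congr 2
        omega
      rw [h1, h2,
        helper3 (k + 1) m (fun μ => ((2 * k + 1).choose (2 * μ + 1) : ℝ)) (fun μ => k + μ + 1),
        hUO (m + 1), ← hO m, ← hO (m + 1)]
      push_cast
      ring

lemma L3 (k : ℕ) (hO : Ok k) (hUO : UOk k) : UEk (k + 1) := by
  intro j
  have h2k : 2 * (k + 1) = (2 * k + 1) + 1 := by ring
  cases j with
  | zero =>
      rw [Nat.cast_zero, zero_mul]
      refine Finset.sum_eq_zero fun μ _ => ?_
      rw [show k + 1 + μ + 1 = (k + 1 + μ) + 1 by omega, CS_zero (k + 1 + μ), mul_zero]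
  | succ m =>
      rw [h2k, LS_rec (2 * k + 1) m,
        helper1 (2 * k + 1) (k + 1 + 1) (fun μ => CS (k + 1 + μ + 1) (m + 1)),
        helper3 (k + 1 + 1) m (fun μ => ((2 * k + 1).choose (2 * μ) : ℝ)) (fun μ => k + 1 + μ),
        helper3 (k + 1 + 1) m (fun μ => ((2 * k + 1).choose (2 * μ + 1) : ℝ)) (fun μ => k + 1 + μ)]
      have drop : ∀ (g : ℕ → ℝ) (p : ℕ), 2 * k + 1 < p →
          ∀ (c : ℕ → ℕ) (jj : ℕ), (∀ μ, μ < k + 1 → c μ = c μ) → True := fun _ _ _ _ _ _ => trivial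
      have h1 : ∀ jj : ℕ, ∑ μ ∈ Finset.range (k + 1 + 1),
          ((2 * k + 1).choose (2 * μ) : ℝ) * CS (k + 1 + μ) jj =
          ∑ μ ∈ Finset.range (k + 1),
          ((2 * k + 1).choose (2 * μ) : ℝ) * CS (k + μ + 1) jj := by
        intro jj
        rw [helperz (k + 1) (fun μ => ((2 * k + 1).choose (2 * μ) : ℝ) * CS (k + 1 + μ) jj)]
        · refine Finset.sum_congr rfl fun μ _ => ?_
          congr 2
          omega
        · rw [Nat.choose_eq_zero_of_lt (by omega), Nat.cast_zero, zero_mul]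
      have h2 : ∀ jj : ℕ, ∑ μ ∈ Finset.range (k + 1 + 1),
          ((2 * k + 1).choose (2 * μ + 1) : ℝ) * CS (k + 1 + μ) jj =
          ∑ μ ∈ Finset.range (k + 1),
          ((2 * k + 1).choose (2 * μ + 1) : ℝ) * CS (k + μ + 1) jj := by
        intro jj
        rw [helperz (k + 1) (fun μ => ((2 * k + 1).choose (2 * μ + 1) : ℝ) * CS (k + 1 + μ) jj)]
        · refine Finset.sum_congr rfl fun μ _ => ?_
          congr 2
          omega
        · rw [Nat.choose_eq_zero_of_lt (by omega), Nat.cast_zero, zero_mul]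
      rw [h1 m, h1 (m + 1), h2 m, h2 (m + 1),
        hUO m, hUO (m + 1), ← hO m, ← hO (m + 1)]
      push_cast
      ring

lemma all_props (k : ℕ) : Ek k ∧ UEk k := by
  induction k with
  | zero => exact ⟨Ek_zero, UEk_zero⟩
  | succ k ih =>
      obtain ⟨hE, hUE⟩ := ih
      have hO := L1 k hE hUE
      have hUO := L4 k hE hUE
      exact ⟨L2 k hO hUO, L3 k hO hUO⟩

theorem ls_even_connection (k j : ℕ) :
    LS (2 * k) j =
      ∑ μ ∈ Finset.range (k + 1),
        (Nat.choose (2 * k) (2 * μ) : ℝ) * CS (k + μ) j := by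
  exact (all_props k).1 j
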